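/- For 1→2 cloning of SU(d) unitary channels, the maximum of F = (√(q⁺_α p⁺_α) + √(q⁻_α p⁻_α))² + q⁺_β (1 − p⁺_α) + q⁻_γ (1 − p⁻_α) over 0 ≤ p⁺_α, p⁻_α ≤ 1, with d⁴q⁺_α = d₊, d⁴q⁻_α = d₋, d⁴q⁺_β = d₊/(d₊−1), d⁴q⁻_γ = d₋/(d₋−1), where d₊ = d(d+1)/2 and d₋ = d(d−1)/2 and d ≥ 2, is attained at p⁺_α = p⁻_α = 1 and equals (√d₊ + √d₋)²/d⁴. -/

import Mathlib

/-- 1→2 cloning of SU(d) unitary channels.  With `d₊ = d(d+1)/2`,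
`d₋ = d(d−1)/2`, and coefficients `q⁺_α = d₊/d⁴`, `q⁻_α = d₋/d⁴`, `q⁺_β = d₊/((d₊−1)d⁴)`,
`q⁻_γ = d₋/((d₋−1)d⁴)`, the maximum of
`F(x,y) = (√(q⁺_α x) + √(q⁻_α y))² + q⁺_β (1−x) + q⁻_γ (1−y)` over `x, y ∈ [0,1]`
is attained at `x = y = 1` and equals `(√d₊ + √d₋)²/d⁴`. -/
theorem cloning_su_d_fidelity (d : ℕ) (hd : 2 ≤ d) :
    let dp : ℝ := (d : ℝ) * ((d : ℝ) + 1) / 2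
    let dm : ℝ := (d : ℝ) * ((d : ℝ) - 1) / 2
    let F : ℝ → ℝ → ℝ := fun x y =>
      (Real.sqrt (dp / (d : ℝ) ^ 4 * x) + Real.sqrt (dm / (d : ℝ) ^ 4 * y)) ^ 2 +
        dp / (dp - 1) / (d : ℝ) ^ 4 * (1 - x) + dm / (dm - 1) / (d : ℝ) ^ 4 * (1 - y)
    IsGreatest {v : ℝ | ∃ x ∈ Set.Icc (0 : ℝ) 1, ∃ y ∈ Set.Icc (0 : ℝ) 1, v = F x y}
        ((Real.sqrt dp + Real.sqrt dm) ^ 2 / (d : ℝ) ^ 4) ∧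
      F 1 1 = (Real.sqrt dp + Real.sqrt dm) ^ 2 / (d : ℝ) ^ 4 := by
  intro dp dm F
  have hd2 : (2:ℝ) ≤ (d:ℝ) := by exact_mod_cast hd
  have hdpos : (0:ℝ) < (d:ℝ) := by linarith
  have hD : (0:ℝ) < (d:ℝ)^4 := by positivity
  have hdp3 : (3:ℝ) ≤ dp := by show (3:ℝ) ≤ (d:ℝ)*((d:ℝ)+1)/2; nlinarith
  have hdm0 : (0:ℝ) ≤ dm := by show (0:ℝ) ≤ (d:ℝ)*((d:ℝ)-1)/2; nlinarith
  have hP : dp/(dp-1) ≤ dp := div_le_self (by linarith) (by linarith)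
  have hQ : dm/(dm-1) ≤ dm := by
    rcases eq_or_lt_of_le hd with h|h
    · have hd2' : (d:ℝ) = 2 := by exact_mod_cast h.symm
      have hdm1 : dm = 1 := by
        show (d:ℝ)*((d:ℝ)-1)/2 = 1; rw [hd2']; norm_num
      rw [hdm1]; norm_num
    · have h3 : (3:ℝ) ≤ (d:ℝ) := by exact_mod_cast h
      have : (3:ℝ) ≤ dm := by show (3:ℝ) ≤ (d:ℝ)*((d:ℝ)-1)/2; nlinarith
      exact div_le_self (by linarith) (by linarith)
  -- sqrt facts
  set s := Real.sqrt dp with hs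
  set t := Real.sqrt dm with ht
  have hs0 : 0 ≤ s := Real.sqrt_nonneg _
  have ht0 : 0 ≤ t := Real.sqrt_nonneg _
  have hs2 : s^2 = dp := Real.sq_sqrt (by linarith)
  have ht2 : t^2 = dm := Real.sq_sqrt hdm0
  have hd4 : Real.sqrt ((d:ℝ)^4) = (d:ℝ)^2 := by
    rw [show ((d:ℝ)^4) = ((d:ℝ)^2)^2 by ring, Real.sqrt_sq (by positivity)]
  have hsqrt : ∀ c x : ℝ, 0 ≤ c → 0 ≤ x →
      Real.sqrt (c / (d:ℝ)^4 * x) = Real.sqrt c * Real.sqrt x / (d:ℝ)^2 := by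
    intro c x hc hx
    rw [div_mul_eq_mul_div, Real.sqrt_div (by positivity), hd4, Real.sqrt_mul hc]
  have hF : ∀ x y : ℝ, 0 ≤ x → 0 ≤ y → F x y =
      (s * Real.sqrt x + t * Real.sqrt y)^2 / (d:ℝ)^4
        + dp/(dp-1)/(d:ℝ)^4*(1-x) + dm/(dm-1)/(d:ℝ)^4*(1-y) := by
    intro x y hx hy
    show (Real.sqrt (dp / (d:ℝ)^4 * x) + Real.sqrt (dm / (d:ℝ)^4 * y))^2 + _ + _ = _
    rw [hsqrt dp x (by linarith) hx, hsqrt dm y hdm0 hy]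
    have : (s * Real.sqrt x / (d:ℝ)^2 + t * Real.sqrt y / (d:ℝ)^2)^2
        = (s * Real.sqrt x + t * Real.sqrt y)^2 / (d:ℝ)^4 := by
      rw [← add_div, div_pow, ← pow_mul]
    rw [this]
  have hF11 : F 1 1 = (s + t)^2 / (d:ℝ)^4 := by
    rw [hF 1 1 zero_le_one zero_le_one, Real.sqrt_one]
    ring
  refine ⟨⟨⟨1, by norm_num, 1, by norm_num, hF11.symm⟩, ?_⟩, hF11⟩
  rintro v ⟨x, ⟨hx0, hx1⟩, y, ⟨hy0, hy1⟩, rfl⟩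
  rw [hF x y hx0 hy0]
  set u := Real.sqrt x with hu
  set w := Real.sqrt y with hw
  have hu0 : 0 ≤ u := Real.sqrt_nonneg _
  have hw0 : 0 ≤ w := Real.sqrt_nonneg _
  have hu2 : u^2 = x := Real.sq_sqrt hx0
  have hw2 : w^2 = y := Real.sq_sqrt hy0
  have hu1 : u ≤ 1 := Real.sqrt_le_one.2 hx1
  have hw1 : w ≤ 1 := Real.sqrt_le_one.2 hy1
  have key : (s*u + t*w)^2 + dp/(dp-1)*(1-x) + dm/(dm-1)*(1-y) ≤ (s+t)^2 := by
    have h1 : dp/(dp-1)*(1-x) ≤ s^2*(1-x) := by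
      apply mul_le_mul_of_nonneg_right _ (by linarith)
      rw [hs2]; exact hP
    have h2 : dm/(dm-1)*(1-y) ≤ t^2*(1-y) := by
      apply mul_le_mul_of_nonneg_right _ (by linarith)
      rw [ht2]; exact hQ
    have huw : u*w ≤ 1 := mul_le_one₀ hu1 hw0 hw1
    have hst : 0 ≤ s*t := mul_nonneg hs0 ht0
    nlinarith [mul_le_mul_of_nonneg_left huw hst]
  calc (s*u + t*w)^2 / (d:ℝ)^4 + dp/(dp-1)/(d:ℝ)^4*(1-x) + dm/(dm-1)/(d:ℝ)^4*(1-y)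
      = ((s*u + t*w)^2 + dp/(dp-1)*(1-x) + dm/(dm-1)*(1-y)) / (d:ℝ)^4 := by ring
    _ ≤ (s+t)^2 / (d:ℝ)^4 := by gcongr
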